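/- Let ν ∈ ℝ and let f : (0, ∞) → ℂ be a twice continuously differentiable function satisfying w²f''(w) + wf'(w) − (w² + ν²)f(w) = 0 for all w > 0, and suppose f has moderate growth: there exist C, N > 0 with |f(w)| ≤ C(1 + w)^N for all w > 0. Then there exists a constant c ∈ ℂ such that f(w) = c·K_ν(w) for all w > 0. -/

import Mathlib

set_option autoImplicit false

open Real MeasureTheory Set

/-!
Any moderate-growth solution on `(0, ∞)` of the modified Bessel differential equation
`w²f'' + wf' − (w² + ν²)f = 0` is a constant multiple of
`K_ν(w) = ∫₀^∞ e^{−w cosh t} cosh(νt) dt`.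
-/


lemma quad_le_exp {t : ℝ} (ht : 0 ≤ t) : 1 + t + t^2/2 ≤ Real.exp t := by
  have h := Real.sum_le_exp_of_nonneg ht 3
  simp [Finset.sum_range_succ, Nat.factorial] at h
  linarith

lemma cosh_ge_quad {t : ℝ} (ht : 0 ≤ t) : 1 + t^2/4 ≤ Real.cosh t := by
  have h1 := quad_le_exp ht
  have h2 := Real.add_one_le_exp (-t)
  rw [Real.cosh_eq]
  linarith

lemma cosh_le_exp' {t : ℝ} (ht : 0 ≤ t) : Real.cosh t ≤ Real.exp t := by
  rw [Real.cosh_eq]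
  have : Real.exp (-t) ≤ Real.exp t := Real.exp_le_exp.2 (by linarith)
  linarith

lemma cosh_le_exp_abs (t : ℝ) : Real.cosh t ≤ Real.exp |t| := by
  rw [← Real.cosh_abs]; exact cosh_le_exp' (abs_nonneg t)

lemma integrable_quad {a : ℝ} (b : ℝ) (ha : 0 < a) :
    Integrable (fun t : ℝ => Real.exp (b*t - a*t^2)) := by
  have h1 : Integrable (fun t : ℝ => Real.exp (-a * t^2)) := integrable_exp_neg_mul_sq ha
  have h2 : Integrable (fun t : ℝ => Real.exp (-a * (t - b/(2*a))^2)) := h1.comp_sub_right _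
  have h3 := h2.const_mul (Real.exp (b^2/(4*a)))
  refine h3.congr (Filter.Eventually.of_forall fun t => ?_)
  simp only [← Real.exp_add]
  congr 1
  field_simp
  ring

/-- The integrand of the `n`-th derivative of `besselK`. -/
noncomputable def besInt (ν : ℝ) (n : ℕ) (x t : ℝ) : ℝ :=
  (-Real.cosh t)^n * Real.exp (-x * Real.cosh t) * Real.cosh (ν*t)

/-- Real-valued Bessel-type integral. -/
noncomputable def bes (ν : ℝ) (n : ℕ) (x : ℝ) : ℝ := ∫ t in Set.Ioi 0, besInt ν n x t

lemma besInt_bound {ν : ℝ} (n : ℕ) {y x t : ℝ} (hy : 0 < y) (hx : y ≤ x) (ht : 0 ≤ t) :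
    |besInt ν n x t| ≤ Real.exp (-y) * Real.exp ((n + |ν|)*t - (y/4)*t^2) := by
  have hc := Real.cosh_pos (x := t)
  have hcv := Real.cosh_pos (x := ν*t)
  have e1 : Real.cosh t ^ n ≤ Real.exp ((n:ℝ)*t) := by
    calc Real.cosh t ^ n ≤ Real.exp t ^ n :=
          pow_le_pow_left₀ hc.le (cosh_le_exp' ht) n
      _ = Real.exp ((n:ℝ)*t) := by rw [← Real.exp_nat_mul]
  have e2 : Real.exp (-x * Real.cosh t) ≤ Real.exp (-y - (y/4)*t^2) := by
    apply Real.exp_le_exp.2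
    have h := cosh_ge_quad ht
    nlinarith [hc, hy, hx]
  have e3 : Real.cosh (ν*t) ≤ Real.exp (|ν| * t) := by
    calc Real.cosh (ν*t) ≤ Real.exp (abs (ν*t)) := cosh_le_exp_abs _
      _ = Real.exp (|ν| * t) := by rw [abs_mul, abs_of_nonneg ht]
  have habs : |besInt ν n x t|
      = Real.cosh t ^ n * Real.exp (-x * Real.cosh t) * Real.cosh (ν*t) := by
    rw [besInt, abs_mul, abs_mul, abs_pow, abs_neg, abs_of_pos hc, Real.abs_exp,
      abs_of_pos hcv]
  rw [habs]
  calc Real.cosh t ^ n * Real.exp (-x * Real.cosh t) * Real.cosh (ν*t)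
      ≤ Real.exp ((n:ℝ)*t) * Real.exp (-y - (y/4)*t^2) * Real.exp (|ν| * t) := by
        apply mul_le_mul (mul_le_mul e1 e2 (Real.exp_pos _).le (Real.exp_pos _).le) e3
          hcv.le (by positivity)
    _ = Real.exp (-y) * Real.exp ((n + |ν|)*t - (y/4)*t^2) := by
        rw [← Real.exp_add, ← Real.exp_add, ← Real.exp_add]; ring_nf

lemma integrable_besBound (ν : ℝ) (n : ℕ) {y : ℝ} (hy : 0 < y) :
    Integrable (fun t : ℝ => Real.exp (-y) * Real.exp (((n:ℝ) + |ν|)*t - (y/4)*t^2)) :=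
  (integrable_quad _ (by positivity)).const_mul _

lemma continuous_besInt (ν : ℝ) (n : ℕ) (x : ℝ) : Continuous (besInt ν n x) := by
  unfold besInt; fun_prop

lemma integrableOn_besInt (ν : ℝ) (n : ℕ) {x : ℝ} (hx : 0 < x) :
    IntegrableOn (besInt ν n x) (Set.Ioi 0) := by
  refine Integrable.mono (integrable_besBound ν n hx).integrableOn
    (continuous_besInt ν n x).aestronglyMeasurable.restrict ?_
  filter_upwards [ae_restrict_mem measurableSet_Ioi] with t ht
  rw [Real.norm_eq_abs, Real.norm_eq_abs, abs_of_nonneg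
    (by positivity : (0:ℝ) ≤ Real.exp (-x) * Real.exp (((n:ℝ) + |ν|)*t - (x/4)*t^2))]
  exact besInt_bound n hx le_rfl (le_of_lt ht)

lemma hasDerivAt_bes (ν : ℝ) (n : ℕ) {x : ℝ} (hx : 0 < x) :
    HasDerivAt (bes ν n) (bes ν (n+1) x) x := by
  have h8 : (0:ℝ) < x/4 := by linarith
  refine (hasDerivAt_integral_of_dominated_loc_of_deriv_le (Metric.ball_mem_nhds x (half_pos hx))
    (Filter.Eventually.of_forall fun y =>
      (continuous_besInt ν n y).aestronglyMeasurable.restrict)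
    (integrableOn_besInt ν n hx)
    (continuous_besInt ν (n+1) x).aestronglyMeasurable.restrict
    ?_ ((integrable_besBound ν (n+1) (half_pos hx)).integrableOn) ?_).2
  · -- bound
    filter_upwards [ae_restrict_mem measurableSet_Ioi] with t ht y hy
    rw [Real.norm_eq_abs]
    apply besInt_bound (n+1) (half_pos hx) _ (le_of_lt ht)
    have h := abs_lt.1 (show |y - x| < x/2 by
      simpa [Real.norm_eq_abs] using mem_ball_iff_norm.1 hy)
    linarith [h.1]
  · -- differentiability
    filter_upwards [ae_restrict_mem measurableSet_Ioi] with t _ y _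
    have hc : HasDerivAt (fun y : ℝ => -y * Real.cosh t) (-Real.cosh t) y := by
      simpa using (hasDerivAt_id y).neg.mul_const (Real.cosh t)
    have he : HasDerivAt (fun y : ℝ => Real.exp (-y * Real.cosh t))
        (Real.exp (-y * Real.cosh t) * -Real.cosh t) y := hc.exp
    have hd := (he.const_mul ((-Real.cosh t)^n)).mul_const (Real.cosh (ν*t))
    have h2 : besInt ν (n+1) y t
        = (-Real.cosh t)^n * (Real.exp (-y * Real.cosh t) * -Real.cosh t) * Real.cosh (ν*t) := by
      unfold besInt; rw [pow_succ]; ring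
    rw [show (fun y => besInt ν n y t)
        = fun y => (-Real.cosh t)^n * (Real.exp (-y * Real.cosh t)) * Real.cosh (ν*t) from rfl,
      h2]
    exact hd

noncomputable def Gfun (ν x t : ℝ) : ℝ :=
  Real.exp (-x * Real.cosh t) * (x * Real.sinh t * Real.cosh (ν*t) + ν * Real.sinh (ν*t))

lemma hasDerivAt_Gfun (ν x : ℝ) (t : ℝ) :
    HasDerivAt (Gfun ν x)
      (-(x^2 * besInt ν 2 x t + x * besInt ν 1 x t - (x^2+ν^2) * besInt ν 0 x t)) t := by
  have hc : HasDerivAt (fun t : ℝ => -x * Real.cosh t) (-x * Real.sinh t) t :=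
    (Real.hasDerivAt_cosh t).const_mul (-x)
  have he : HasDerivAt (fun t : ℝ => Real.exp (-x * Real.cosh t))
      (Real.exp (-x * Real.cosh t) * (-x * Real.sinh t)) t := hc.exp
  have hνt : HasDerivAt (fun t : ℝ => ν*t) ν t := by
    simpa using (hasDerivAt_id t).const_mul ν
  have hcν : HasDerivAt (fun t : ℝ => Real.cosh (ν*t)) (Real.sinh (ν*t) * ν) t := by
    exact (Real.hasDerivAt_cosh (ν*t)).comp t hνt
  have hsν : HasDerivAt (fun t : ℝ => Real.sinh (ν*t)) (Real.cosh (ν*t) * ν) t := by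
    exact (Real.hasDerivAt_sinh (ν*t)).comp t hνt
  have hu : HasDerivAt (fun t : ℝ => x * Real.sinh t * Real.cosh (ν*t) + ν * Real.sinh (ν*t))
      (x * Real.cosh t * Real.cosh (ν*t) + x * Real.sinh t * (Real.sinh (ν*t) * ν)
        + ν * (Real.cosh (ν*t) * ν)) t := by
    have h1 : HasDerivAt (fun t : ℝ => x * Real.sinh t) (x * Real.cosh t) t :=
      (Real.hasDerivAt_sinh t).const_mul x
    exact (h1.mul hcν).add (hsν.const_mul ν)
  have := he.mul hu
  refine this.congr_deriv (Eq.symm ?_)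
  unfold besInt
  have hk := Real.cosh_sq_sub_sinh_sq t
  linear_combination (-(x^2) * Real.exp (-x * Real.cosh t) * Real.cosh (ν*t)) * hk

lemma tendsto_Gfun (ν : ℝ) {x : ℝ} (hx : 0 < x) :
    Filter.Tendsto (Gfun ν x) Filter.atTop (nhds 0) := by
  have hb : ∀ t : ℝ, 0 ≤ t → ‖Gfun ν x t‖ ≤ (x + |ν|) * Real.exp ((1 + |ν|) * t - (x/4)*t^2) := by
    intro t ht
    have hc := Real.cosh_pos (x := t)
    have hcv := Real.cosh_pos (x := ν*t)
    have hsle : |Real.sinh t| ≤ Real.cosh t := by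
      rw [Real.abs_sinh, abs_of_nonneg ht]
      nlinarith [Real.cosh_sq_sub_sinh_sq t, Real.sinh_nonneg_iff.2 ht, hc]
    have hsleν : |Real.sinh (ν*t)| ≤ Real.cosh (ν*t) := by
      rw [Real.abs_sinh, ← Real.cosh_abs]
      nlinarith [Real.cosh_sq_sub_sinh_sq (abs (ν*t)), Real.sinh_nonneg_iff.2 (abs_nonneg (ν*t)),
        Real.cosh_pos (x := abs (ν*t))]
    have e2 : Real.exp (-x * Real.cosh t) ≤ Real.exp (-(x/4)*t^2) := by
      apply Real.exp_le_exp.2; nlinarith [cosh_ge_quad ht]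
    have e3 : Real.cosh (ν*t) ≤ Real.exp (|ν| * t) := by
      calc Real.cosh (ν*t) ≤ Real.exp (abs (ν*t)) := cosh_le_exp_abs _
        _ = Real.exp (|ν| * t) := by rw [abs_mul, abs_of_nonneg ht]
    have e1 : Real.cosh t ≤ Real.exp t := cosh_le_exp' ht
    have h1 : ‖Gfun ν x t‖ ≤ Real.exp (-x * Real.cosh t)
        * ((x * Real.exp t + |ν|) * Real.exp (|ν| * t)) := by
      rw [Gfun, Real.norm_eq_abs, abs_mul, Real.abs_exp]
      apply mul_le_mul_of_nonneg_left _ (Real.exp_pos _).le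
      calc |x * Real.sinh t * Real.cosh (ν*t) + ν * Real.sinh (ν*t)|
          ≤ |x * Real.sinh t * Real.cosh (ν*t)| + |ν * Real.sinh (ν*t)| := abs_add_le _ _
        _ ≤ x * Real.exp t * Real.exp (|ν| * t) + |ν| * Real.exp (|ν| * t) := by
            rw [abs_mul, abs_mul, abs_mul, abs_of_nonneg hx.le, abs_of_pos hcv]
            have hs1 : |Real.sinh t| ≤ Real.exp t := hsle.trans e1
            have hs2 : |Real.sinh (ν*t)| ≤ Real.exp (|ν| * t) := hsleν.trans e3
            have : x * |Real.sinh t| * Real.cosh (ν*t) ≤ x * Real.exp t * Real.exp (|ν| * t) := by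
              apply mul_le_mul (by nlinarith) e3 hcv.le (by positivity)
            have h2 : |ν| * |Real.sinh (ν*t)| ≤ |ν| * Real.exp (|ν| * t) :=
              mul_le_mul_of_nonneg_left hs2 (abs_nonneg ν)
            linarith
        _ = (x * Real.exp t + |ν|) * Real.exp (|ν| * t) := by ring
    refine h1.trans ?_
    have hexp1 : (1:ℝ) ≤ Real.exp t := by simpa using Real.exp_le_exp.2 ht
    calc Real.exp (-x * Real.cosh t) * ((x * Real.exp t + |ν|) * Real.exp (|ν| * t))
        ≤ Real.exp (-(x/4)*t^2) * ((x + |ν|) * Real.exp t * Real.exp (|ν| * t)) := by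
          apply mul_le_mul e2 _ (by positivity) (Real.exp_pos _).le
          have : x * Real.exp t + |ν| ≤ (x + |ν|) * Real.exp t := by nlinarith [abs_nonneg ν]
          nlinarith [Real.exp_pos (|ν| * t), Real.exp_pos t, abs_nonneg ν]
      _ = (x + |ν|) * Real.exp ((1 + |ν|) * t - (x/4)*t^2) := by
          have e4 : Real.exp ((1 + |ν|) * t - (x/4)*t^2)
              = Real.exp t * Real.exp (|ν| * t) * Real.exp (-(x/4)*t^2) := by
            rw [← Real.exp_add, ← Real.exp_add]
            congr 1
            ring
          rw [e4]; ring
  have hq : Filter.Tendsto (fun t : ℝ => (1 + |ν|) * t - (x/4)*t^2) Filter.atTop Filter.atBot := by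
    have h1 : Filter.Tendsto (fun t : ℝ => (x/4)*t) Filter.atTop Filter.atTop :=
      Filter.Tendsto.const_mul_atTop (by positivity) Filter.tendsto_id
    have h2 : Filter.Tendsto (fun t : ℝ => (1 + |ν|) + -((x/4)*t)) Filter.atTop Filter.atBot :=
      Filter.tendsto_atBot_add_const_left _ _ (Filter.tendsto_neg_atTop_atBot.comp h1)
    have h3 := Filter.Tendsto.atTop_mul_atBot₀ Filter.tendsto_id h2
    refine h3.congr' ?_
    filter_upwards [Filter.eventually_ge_atTop (0:ℝ)] with t _
    simp only [id_eq]
    ring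
  have hB : Filter.Tendsto (fun t : ℝ => (x + |ν|) * Real.exp ((1 + |ν|) * t - (x/4)*t^2))
      Filter.atTop (nhds 0) := by
    have := (Real.tendsto_exp_atBot.comp hq).const_mul (x + |ν|)
    simpa using this
  have hev : ∀ᶠ t in Filter.atTop,
      ‖Gfun ν x t‖ ≤ (x + |ν|) * Real.exp ((1 + |ν|) * t - (x/4)*t^2) := by
    filter_upwards [Filter.eventually_ge_atTop (0:ℝ)] with t ht
    exact hb t ht
  exact squeeze_zero_norm' hev hB

lemma bes_ode (ν : ℝ) {x : ℝ} (hx : 0 < x) :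
    x^2 * bes ν 2 x + x * bes ν 1 x - (x^2 + ν^2) * bes ν 0 x = 0 := by
  have hint : IntegrableOn
      (fun t => -(x^2 * besInt ν 2 x t + x * besInt ν 1 x t - (x^2+ν^2) * besInt ν 0 x t))
      (Set.Ioi 0) :=
    ((((integrableOn_besInt ν 2 hx).const_mul (x^2)).add
      ((integrableOn_besInt ν 1 hx).const_mul x)).sub
      ((integrableOn_besInt ν 0 hx).const_mul (x^2+ν^2))).neg
  have hftc := MeasureTheory.integral_Ioi_of_hasDerivAt_of_tendsto'
    (f := Gfun ν x)
    (fun t _ => hasDerivAt_Gfun ν x t) hint (tendsto_Gfun ν hx)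
  have hG0 : Gfun ν x 0 = 0 := by simp [Gfun]
  rw [hG0, sub_zero] at hftc
  have hsplit : ∫ t in Set.Ioi (0:ℝ),
      -(x^2 * besInt ν 2 x t + x * besInt ν 1 x t - (x^2+ν^2) * besInt ν 0 x t)
      = -(x^2 * bes ν 2 x + x * bes ν 1 x - (x^2+ν^2) * bes ν 0 x) := by
    rw [MeasureTheory.integral_neg, MeasureTheory.integral_sub, MeasureTheory.integral_add,
      MeasureTheory.integral_const_mul, MeasureTheory.integral_const_mul,
      MeasureTheory.integral_const_mul]
    · rfl
    · exact (integrableOn_besInt ν 2 hx).const_mul _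
    · exact (integrableOn_besInt ν 1 hx).const_mul _
    · exact ((integrableOn_besInt ν 2 hx).const_mul _).add ((integrableOn_besInt ν 1 hx).const_mul _)
    · exact (integrableOn_besInt ν 0 hx).const_mul _
  rw [hsplit] at hftc
  linarith [hftc]

lemma besInt_nonneg (ν : ℝ) (x t : ℝ) : 0 ≤ besInt ν 0 x t := by
  unfold besInt
  positivity

lemma bes_lower (ν : ℝ) {x : ℝ} (hx : 0 < x) : Real.exp (-x * Real.cosh 1) ≤ bes ν 0 x := by
  have h1 : ∫ t in Set.Ioc (0:ℝ) 1, besInt ν 0 x t ≤ bes ν 0 x := by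
    apply MeasureTheory.setIntegral_mono_set (integrableOn_besInt ν 0 hx)
    · filter_upwards with t using besInt_nonneg ν x t
    · exact (Set.Ioc_subset_Ioi_self).eventuallyLE
  refine le_trans ?_ h1
  have h2 : ∫ t in Set.Ioc (0:ℝ) 1, Real.exp (-x * Real.cosh 1)
      ≤ ∫ t in Set.Ioc (0:ℝ) 1, besInt ν 0 x t := by
    apply MeasureTheory.setIntegral_mono_on
    · exact MeasureTheory.integrableOn_const (by simp) (by simp)
    · exact (integrableOn_besInt ν 0 hx).mono_set Set.Ioc_subset_Ioi_self
    · exact measurableSet_Ioc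
    · intro t ht
      unfold besInt
      rw [pow_zero, one_mul]
      have hct : Real.cosh t ≤ Real.cosh 1 := by
        rw [Real.cosh_le_cosh]
        rw [abs_of_nonneg ht.1.le, abs_one]
        exact ht.2
      have he : Real.exp (-x * Real.cosh 1) ≤ Real.exp (-x * Real.cosh t) := by
        apply Real.exp_le_exp.2
        nlinarith
      nlinarith [Real.one_le_cosh (ν*t), Real.exp_pos (-x * Real.cosh t)]
  refine le_trans (le_of_eq ?_) h2
  rw [MeasureTheory.setIntegral_const]
  simp [Real.volume_Ioc]

lemma bes_pos (ν : ℝ) {x : ℝ} (hx : 0 < x) : 0 < bes ν 0 x :=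
  lt_of_lt_of_le (Real.exp_pos _) (bes_lower ν hx)

lemma bes_upper (ν : ℝ) : ∃ C₁ : ℝ, 0 < C₁ ∧ ∀ x : ℝ, 1 ≤ x → bes ν 0 x ≤ C₁ * Real.exp (-x) := by
  refine ⟨(∫ t in Set.Ioi (0:ℝ), Real.exp (|ν| * t - t^2/4)) + 1, ?_, ?_⟩
  · have : 0 ≤ ∫ t in Set.Ioi (0:ℝ), Real.exp (|ν| * t - t^2/4) :=
      MeasureTheory.integral_nonneg fun t => (Real.exp_pos _).le
    linarith
  · intro x hx
    have hx0 : (0:ℝ) < x := by linarith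
    have hint : IntegrableOn (fun t : ℝ => Real.exp (|ν| * t - t^2/4)) (Set.Ioi 0) := by
      have := integrable_quad (a := (1:ℝ)/4) (|ν|) (by norm_num)
      refine (this.congr (Filter.Eventually.of_forall fun t => ?_)).integrableOn
      ring_nf
    have h1 : bes ν 0 x ≤ ∫ t in Set.Ioi (0:ℝ), Real.exp (|ν| * t - t^2/4) * Real.exp (-x) := by
      apply MeasureTheory.setIntegral_mono_on
      · exact integrableOn_besInt ν 0 hx0
      · exact hint.mul_const _
      · exact measurableSet_Ioi
      · intro t ht
        have ht' : (0:ℝ) ≤ t := (le_of_lt ht)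
        unfold besInt
        rw [pow_zero, one_mul]
        have e3 : Real.cosh (ν*t) ≤ Real.exp (|ν| * t) := by
          calc Real.cosh (ν*t) ≤ Real.exp (abs (ν*t)) := cosh_le_exp_abs _
            _ = Real.exp (|ν| * t) := by rw [abs_mul, abs_of_nonneg ht']
        have e2 : Real.exp (-x * Real.cosh t) ≤ Real.exp (-t^2/4 - x) := by
          apply Real.exp_le_exp.2
          nlinarith [cosh_ge_quad ht']
        calc Real.exp (-x * Real.cosh t) * Real.cosh (ν*t)
            ≤ Real.exp (-t^2/4 - x) * Real.exp (|ν| * t) := by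
              apply mul_le_mul e2 e3 (Real.cosh_pos _).le (Real.exp_pos _).le
          _ = Real.exp (|ν| * t - t^2/4) * Real.exp (-x) := by
              rw [← Real.exp_add, ← Real.exp_add]
              congr 1
              ring
    rw [MeasureTheory.integral_mul_const] at h1
    have := Real.exp_pos (-x)
    nlinarith [h1]

/-- The modified Bessel function of the second kind,
`K_ν(x) = ∫₀^∞ e^{−x·cosh t} cosh(νt) dt`. -/
noncomputable def besselK (ν : ℂ) (x : ℝ) : ℂ :=
  ∫ t in Set.Ioi (0 : ℝ), (Real.exp (-x * Real.cosh t) : ℂ) * Complex.cosh (ν * t)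

lemma besselK_eq_bes (ν : ℝ) (x : ℝ) : besselK (ν:ℂ) x = ((bes ν 0 x : ℝ) : ℂ) := by
  have hcast : ∫ t in Set.Ioi (0:ℝ), ((besInt ν 0 x t : ℝ) : ℂ)
      = (((∫ t in Set.Ioi (0:ℝ), besInt ν 0 x t : ℝ)) : ℂ) := integral_ofReal
  rw [besselK, bes, ← hcast]
  refine MeasureTheory.integral_congr_ae (Filter.Eventually.of_forall fun t => ?_)
  unfold besInt
  push_cast
  ring

/-- Let `ν ∈ ℝ` and let `f : (0, ∞) → ℂ` be twice continuously differentiable with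
`w²f''(w) + wf'(w) − (w² + ν²)f(w) = 0` for all `w > 0`, and suppose `f` has moderate
growth: `|f(w)| ≤ C(1 + w)^N` for some `C, N > 0`.  Then `f = c·K_ν` on `(0, ∞)` for
some constant `c ∈ ℂ`. -/
theorem moderate_growth_bessel_solution (ν : ℝ) (f : ℝ → ℂ)
    (hf : ContDiffOn ℝ 2 f (Set.Ioi 0))
    (hode : ∀ w : ℝ, 0 < w →
      (w : ℂ) ^ 2 * deriv (deriv f) w + (w : ℂ) * deriv f w
        - ((w : ℂ) ^ 2 + (ν : ℂ) ^ 2) * f w = 0)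
    (hgrowth : ∃ C N : ℝ, 0 < C ∧ 0 < N ∧ ∀ w : ℝ, 0 < w → ‖f w‖ ≤ C * (1 + w) ^ N) :
    ∃ c : ℂ, ∀ w : ℝ, 0 < w → f w = c * besselK (ν : ℂ) w := by
  obtain ⟨C, N, hC, hN, hgr⟩ := hgrowth
  obtain ⟨C₁, hC₁, hK⟩ := bes_upper ν
  have hder1 : ∀ w ∈ Set.Ioi (0:ℝ), HasDerivAt f (deriv f w) w := by
    intro w hw
    exact ((hf.contDiffAt ((isOpen_Ioi).mem_nhds hw)).differentiableAt
      (by norm_num)).hasDerivAt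
  have hfd : ContDiffOn ℝ 1 (deriv f) (Set.Ioi 0) :=
    hf.deriv_of_isOpen isOpen_Ioi (by norm_num)
  have hder2 : ∀ w ∈ Set.Ioi (0:ℝ), HasDerivAt (deriv f) (deriv (deriv f) w) w := fun w hw =>
    ((hfd.contDiffAt ((isOpen_Ioi).mem_nhds hw)).differentiableAt one_ne_zero).hasDerivAt
  set W : ℝ → ℂ := fun w => f w * ((bes ν 1 w : ℝ) : ℂ) - deriv f w * ((bes ν 0 w : ℝ) : ℂ)
    with hWdef
  have const_of : ∀ (F : ℝ → ℂ), (∀ t ∈ Set.Ioi (0:ℝ), HasDerivAt F 0 t) →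
      ∀ w : ℝ, 0 < w → F w = F 1 := by
    intro F hF w hw
    rcases le_total w 1 with h | h
    · have hint := intervalIntegral.integral_eq_sub_of_hasDerivAt
        (f := F) (f' := fun _ => (0:ℂ)) (a := w) (b := 1)
        (fun t ht => hF t (by
          rw [Set.uIcc_of_le h] at ht
          exact lt_of_lt_of_le hw ht.1)) (intervalIntegrable_const)
      simp only [intervalIntegral.integral_const, smul_zero] at hint
      linear_combination hint
    · have hint := intervalIntegral.integral_eq_sub_of_hasDerivAt
        (f := F) (f' := fun _ => (0:ℂ)) (a := 1) (b := w)
        (fun t ht => hF t (by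
          rw [Set.uIcc_of_le h] at ht
          exact lt_of_lt_of_le one_pos ht.1)) (intervalIntegrable_const)
      simp only [intervalIntegral.integral_const, smul_zero] at hint
      linear_combination -hint
  have besOdeC : ∀ w : ℝ, 0 < w →
      (w:ℂ)^2 * ((bes ν 2 w : ℝ) : ℂ) + (w:ℂ) * ((bes ν 1 w : ℝ) : ℂ)
        - ((w:ℂ)^2 + (ν:ℂ)^2) * ((bes ν 0 w : ℝ) : ℂ) = 0 := by
    intro w hw
    exact_mod_cast congrArg (fun r : ℝ => (r : ℂ)) (bes_ode ν hw)
  have hWderiv : ∀ w ∈ Set.Ioi (0:ℝ), HasDerivAt W (-(W w) / w) w := by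
    intro w hw
    have hw0 : (0:ℝ) < w := hw
    have hwC : (w:ℂ) ≠ 0 := by exact_mod_cast hw0.ne'
    have h1 := (hder1 w hw).mul ((hasDerivAt_bes ν 1 hw0).ofReal_comp)
    have h2 := (hder2 w hw).mul ((hasDerivAt_bes ν 0 hw0).ofReal_comp)
    simp only [show (1+1:ℕ) = 2 from rfl, show (0+1:ℕ) = 1 from rfl] at h1 h2
    have hW12 := h1.sub h2
    refine hW12.congr_deriv (Eq.symm ?_)
    rw [div_eq_iff hwC]
    have hmul : ((deriv f w * ((bes ν 1 w : ℝ):ℂ) + f w * ((bes ν 2 w : ℝ):ℂ))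
          - (deriv (deriv f) w * ((bes ν 0 w : ℝ):ℂ) + deriv f w * ((bes ν 1 w : ℝ):ℂ))) * w * w
        = (-(W w)) * w := by
      simp only [hWdef]
      linear_combination (f w) * besOdeC w hw0 + (-((bes ν 0 w : ℝ):ℂ)) * hode w hw0
    exact (mul_right_cancel₀ hwC hmul).symm
  have hVderiv : ∀ w ∈ Set.Ioi (0:ℝ), HasDerivAt (fun w : ℝ => (w:ℂ) * W w) 0 w := by
    intro w hw
    have hw0 : (0:ℝ) < w := hw
    have hwC : (w:ℂ) ≠ 0 := by exact_mod_cast hw0.ne'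
    have hid : HasDerivAt (fun x : ℝ => ((x:ℝ):ℂ)) 1 w := by
      simpa using (hasDerivAt_id w).ofReal_comp
    have hmul := hid.mul (hWderiv w hw)
    refine hmul.congr_deriv (Eq.symm ?_)
    field_simp
    ring
  have hWA : ∀ w : ℝ, 0 < w → (w:ℂ) * W w = W 1 := by
    intro w hw
    have := const_of _ hVderiv w hw
    simpa using this
  have hgC0 : ∀ w : ℝ, 0 < w → ((bes ν 0 w : ℝ):ℂ) ≠ 0 := by
    intro w hw
    exact_mod_cast (bes_pos ν hw).ne'
  set q : ℝ → ℂ := fun w => f w / ((bes ν 0 w : ℝ) : ℂ) with hqdef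
  have hqderiv : ∀ w ∈ Set.Ioi (0:ℝ), HasDerivAt q
      (-(W 1) * (((1:ℝ)/(w * (bes ν 0 w)^2) : ℝ) : ℂ)) w := by
    intro w hw
    have hw0 : (0:ℝ) < w := hw
    have hwC : (w:ℂ) ≠ 0 := by exact_mod_cast hw0.ne'
    have h := (hder1 w hw).div ((hasDerivAt_bes ν 0 hw0).ofReal_comp) (hgC0 w hw0)
    simp only [show (0+1:ℕ) = 1 from rfl] at h
    refine h.congr_deriv (Eq.symm ?_)
    rw [← hWA w hw0]
    simp only [hWdef]
    have hcast : ((1/(w * (bes ν 0 w)^2) : ℝ) : ℂ) = 1/((w:ℂ) * ((bes ν 0 w : ℝ):ℂ)^2) := by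
      push_cast
      ring
    rw [hcast, mul_one_div]
    rw [div_eq_div_iff (by
      exact mul_ne_zero hwC (pow_ne_zero 2 (hgC0 w hw0))) (pow_ne_zero 2 (hgC0 w hw0))]
    ring
  rcases eq_or_ne (W 1) 0 with hA | hA
  · refine ⟨q 1, fun w hw => ?_⟩
    have hq0 : ∀ t ∈ Set.Ioi (0:ℝ), HasDerivAt q 0 t := by
      intro t ht
      have := hqderiv t ht
      rwa [hA, neg_zero, zero_mul] at this
    have hqc := const_of q hq0 w hw
    rw [besselK_eq_bes]
    calc f w = q w * ((bes ν 0 w : ℝ):ℂ) := by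
          rw [hqdef]
          exact (div_mul_cancel₀ _ (hgC0 w hw)).symm
      _ = q 1 * ((bes ν 0 w : ℝ):ℂ) := by rw [hqc]
  · exfalso
    have hcosh1 : Real.cosh 1 < 2 := by
      rw [Real.cosh_eq]
      have h1 := Real.exp_one_lt_d9
      have h2 : Real.exp (-1) < 1 := by
        have := Real.exp_lt_exp.2 (show (-1:ℝ) < 0 by norm_num)
        simpa using this
      nlinarith
    have hbcont : ∀ t : ℝ, 0 < t → ContinuousAt (bes ν 0) t := fun t ht =>
      (hasDerivAt_bes ν 0 ht).continuousAt
    have hqint : ∀ w : ℝ, 1 ≤ w → q w - q 1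
        = -(W 1) * ((∫ t in (1:ℝ)..w, 1/(t * (bes ν 0 t)^2) : ℝ) : ℂ) := by
      intro w hw
      have hcont : ContinuousOn (fun t : ℝ => 1/(t * (bes ν 0 t)^2)) (Set.uIcc 1 w) := by
        rw [Set.uIcc_of_le hw]
        apply ContinuousOn.div continuousOn_const
        · have hbcOn : ContinuousOn (bes ν 0) (Set.Icc 1 w) :=
            fun t ht => (hbcont t (lt_of_lt_of_le one_pos ht.1)).continuousWithinAt
          exact continuousOn_id.mul (hbcOn.pow 2)
        · intro t ht
          have h1 : (0:ℝ) < t := lt_of_lt_of_le one_pos ht.1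
          have h2 := bes_pos ν h1
          positivity
      have hint := intervalIntegral.integral_eq_sub_of_hasDerivAt
        (f := q) (f' := fun t => -(W 1) * (((1:ℝ)/(t * (bes ν 0 t)^2) : ℝ) : ℂ)) (a := 1) (b := w)
        (fun t ht => hqderiv t
          (by rw [Set.uIcc_of_le hw] at ht; exact lt_of_lt_of_le one_pos ht.1))
        ((continuousOn_const.mul (Complex.continuous_ofReal.comp_continuousOn
          hcont)).intervalIntegrable)
      rw [intervalIntegral.integral_const_mul, intervalIntegral.integral_ofReal] at hint
      rw [← hint]
    have hIlow : ∀ w : ℝ, 1 ≤ w → (Real.exp (2*w) - Real.exp 2) / (2 * C₁^2 * w)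
        ≤ ∫ t in (1:ℝ)..w, 1/(t * (bes ν 0 t)^2) := by
      intro w hw
      have hw0 : (0:ℝ) < w := lt_of_lt_of_le one_pos hw
      have hcont : ContinuousOn (fun t : ℝ => 1/(t * (bes ν 0 t)^2)) (Set.uIcc 1 w) := by
        rw [Set.uIcc_of_le hw]
        apply ContinuousOn.div continuousOn_const
        · have hbcOn : ContinuousOn (bes ν 0) (Set.Icc 1 w) :=
            fun t ht => (hbcont t (lt_of_lt_of_le one_pos ht.1)).continuousWithinAt
          exact continuousOn_id.mul (hbcOn.pow 2)
        · intro t ht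
          have h1 : (0:ℝ) < t := lt_of_lt_of_le one_pos ht.1
          have h2 := bes_pos ν h1
          positivity
      have hmono : ∫ t in (1:ℝ)..w, Real.exp (2*t) / (C₁^2 * w)
          ≤ ∫ t in (1:ℝ)..w, 1/(t * (bes ν 0 t)^2) := by
        apply intervalIntegral.integral_mono_on hw
        · exact Continuous.intervalIntegrable (by fun_prop) _ _
        · exact hcont.intervalIntegrable
        · intro t ht
          have ht0 : (0:ℝ) < t := lt_of_lt_of_le one_pos ht.1
          have hb := bes_pos ν ht0
          have hup := hK t ht.1
          rw [div_le_div_iff₀ (by positivity) (by positivity)]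
          have hexp : Real.exp (-t)^2 * Real.exp (2*t) = 1 := by
            rw [← Real.exp_nat_mul, ← Real.exp_add]
            norm_num
          have hb2 : (bes ν 0 t)^2 ≤ (C₁ * Real.exp (-t))^2 := by nlinarith
          have h4 : Real.exp (2*t) * (t * (C₁ * Real.exp (-t))^2) = t * C₁^2 := by
            linear_combination (t*C₁^2) * hexp
          have h5 := mul_le_mul_of_nonneg_left hb2
            (mul_nonneg (Real.exp_pos (2*t)).le ht0.le)
          nlinarith [h4, h5, ht.2, sq_nonneg C₁, ht.1]
      have hval : ∫ t in (1:ℝ)..w, Real.exp (2*t) / (C₁^2 * w)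
          = (Real.exp (2*w) - Real.exp 2) / (2 * C₁^2 * w) := by
        have hd : ∀ t ∈ Set.uIcc (1:ℝ) w,
            HasDerivAt (fun t => Real.exp (2*t) / (2 * C₁^2 * w))
              (Real.exp (2*t) / (C₁^2 * w)) t := by
          intro t _
          have h1 : HasDerivAt (fun t : ℝ => 2*t) 2 t := by
            simpa using (hasDerivAt_id t).const_mul 2
          have h2 := (h1.exp).div_const (2 * C₁^2 * w)
          refine h2.congr_deriv (Eq.symm ?_)
          field_simp
        have hres := intervalIntegral.integral_eq_sub_of_hasDerivAt hd
          (Continuous.intervalIntegrable (by fun_prop) _ _)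
        rw [hres, show (2:ℝ)*1 = 2 by norm_num, div_sub_div_same]
      linarith
    have hqbound : ∀ w : ℝ, 1 ≤ w → ‖q w‖ ≤ C * (1+w)^N * Real.exp (w * Real.cosh 1) := by
      intro w hw
      have hw0 : (0:ℝ) < w := lt_of_lt_of_le one_pos hw
      have hb := bes_pos ν hw0
      have hlow := bes_lower ν hw0
      rw [hqdef]
      simp only []
      rw [norm_div, Complex.norm_real, Real.norm_eq_abs, abs_of_pos hb, div_le_iff₀ hb]
      have h1 := hgr w hw0
      have h3 : (1:ℝ) ≤ Real.exp (w * Real.cosh 1) * bes ν 0 w := by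
        have hm := mul_le_mul_of_nonneg_left hlow (Real.exp_pos (w * Real.cosh 1)).le
        rwa [← Real.exp_add, show w * Real.cosh 1 + -w * Real.cosh 1 = 0 by ring,
          Real.exp_zero] at hm
      calc ‖f w‖ ≤ C*(1+w)^N := h1
        _ = C*(1+w)^N * 1 := by ring
        _ ≤ C*(1+w)^N * (Real.exp (w * Real.cosh 1) * bes ν 0 w) := by
            apply mul_le_mul_of_nonneg_left h3
            positivity
        _ = C*(1+w)^N * Real.exp (w * Real.cosh 1) * bes ν 0 w := by ring
    have hmain : ∀ w : ℝ, 1 ≤ w →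
        ‖W 1‖ * ((Real.exp (2*w) - Real.exp 2) / (2 * C₁^2 * w))
          ≤ C*(1+w)^N * Real.exp (w * Real.cosh 1) + ‖q 1‖ := by
      intro w hw
      have h1 := hqint w hw
      have h2 : ‖q w - q 1‖ = ‖W 1‖ * |∫ t in (1:ℝ)..w, 1/(t*(bes ν 0 t)^2)| := by
        rw [h1, norm_mul, norm_neg, Complex.norm_real, Real.norm_eq_abs]
      have h3 : ‖W 1‖ * ((Real.exp (2*w) - Real.exp 2)/(2*C₁^2*w)) ≤ ‖q w - q 1‖ := by
        rw [h2]
        apply mul_le_mul_of_nonneg_left _ (norm_nonneg _)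
        exact le_trans (hIlow w hw) (le_abs_self _)
      have h4 : ‖q w - q 1‖ ≤ ‖q w‖ + ‖q 1‖ := norm_sub_le _ _
      have h5 := hqbound w hw
      linarith
    have hmain2 : ∀ w : ℝ, 1 ≤ w →
        ‖W 1‖ * (1 - Real.exp (2 - 2*w)) / (2 * C₁^2)
          ≤ (C*(1+w)^N * Real.exp (w * Real.cosh 1) + ‖q 1‖) * (w * Real.exp (-(2*w))) := by
      intro w hw
      have hw0 : (0:ℝ) < w := lt_of_lt_of_le one_pos hw
      have h := mul_le_mul_of_nonneg_right (hmain w hw)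
        (show (0:ℝ) ≤ w * Real.exp (-(2*w)) by positivity)
      refine le_trans (le_of_eq ?_) h
      have e1 : Real.exp (2*w) * Real.exp (-(2*w)) = 1 := by
        rw [← Real.exp_add]; norm_num
      have e2 : Real.exp 2 * Real.exp (-(2*w)) = Real.exp (2 - 2*w) := by
        rw [← Real.exp_add]; ring_nf
      have key : (Real.exp (2*w) - Real.exp 2)/(2*C₁^2*w) * (w * Real.exp (-(2*w)))
          = (1 - Real.exp (2-2*w))/(2*C₁^2) := by
        rw [div_mul_eq_mul_div,
          show (Real.exp (2*w) - Real.exp 2) * (w * Real.exp (-(2*w)))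
            = w * ((Real.exp (2*w)*Real.exp (-(2*w))) - (Real.exp 2 * Real.exp (-(2*w))))
            from by ring, e1, e2,
          show (2:ℝ)*C₁^2*w = w * (2*C₁^2) from by ring,
          mul_div_mul_left _ _ hw0.ne']
      calc ‖W 1‖ * (1 - Real.exp (2-2*w))/(2*C₁^2)
          = ‖W 1‖ * ((1 - Real.exp (2-2*w))/(2*C₁^2)) := by ring
        _ = ‖W 1‖ * ((Real.exp (2*w) - Real.exp 2)/(2*C₁^2*w) * (w * Real.exp (-(2*w)))) := by
            rw [key]
        _ = ‖W 1‖ * ((Real.exp (2*w) - Real.exp 2)/(2*C₁^2*w)) * (w * Real.exp (-(2*w))) := by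
            ring
    have hLlim : Filter.Tendsto (fun w : ℝ => ‖W 1‖ * (1 - Real.exp (2 - 2*w)) / (2*C₁^2))
        Filter.atTop (nhds (‖W 1‖ / (2*C₁^2))) := by
      have h0 : Filter.Tendsto (fun w : ℝ => 2 + -(2*w)) Filter.atTop Filter.atBot :=
        Filter.tendsto_atBot_add_const_left _ _
          (Filter.tendsto_neg_atTop_atBot.comp
            (Filter.Tendsto.const_mul_atTop two_pos Filter.tendsto_id))
      have h1 : Filter.Tendsto (fun w : ℝ => 2 - 2*w) Filter.atTop Filter.atBot :=
        h0.congr (fun w => by ring)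
      have h2 := Real.tendsto_exp_atBot.comp h1
      have h3 : Filter.Tendsto (fun w : ℝ => ‖W 1‖ * (1 - Real.exp (2-2*w)) / (2*C₁^2))
          Filter.atTop (nhds (‖W 1‖ * (1 - 0)/(2*C₁^2))) :=
        ((tendsto_const_nhds.sub h2).const_mul _).div_const _
      simpa using h3
    have hRlim : Filter.Tendsto
        (fun w : ℝ => (C*(1+w)^N * Real.exp (w * Real.cosh 1) + ‖q 1‖) * (w * Real.exp (-(2*w))))
        Filter.atTop (nhds 0) := by
      have hbpos : (0:ℝ) < 2 - Real.cosh 1 := by linarith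
      have hzero := tendsto_rpow_mul_exp_neg_mul_atTop_nhds_zero (N+1) (2 - Real.cosh 1) hbpos
      have hzero2 := hzero.const_mul (C*2^N + ‖q 1‖)
      rw [mul_zero] at hzero2
      apply squeeze_zero_norm' ?_ hzero2
      filter_upwards [Filter.eventually_ge_atTop (1:ℝ)] with w hw
      have hw0 : (0:ℝ) < w := lt_of_lt_of_le one_pos hw
      have hRnn : (0:ℝ) ≤ (C*(1+w)^N * Real.exp (w*Real.cosh 1) + ‖q 1‖)
          * (w * Real.exp (-(2*w))) := by positivity
      rw [Real.norm_eq_abs, abs_of_nonneg hRnn]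
      have p1 : (1+w)^N ≤ 2^N * w^N := by
        have h12 : (1+w) ≤ 2*w := by linarith
        calc (1+w)^N ≤ (2*w)^N := Real.rpow_le_rpow (by linarith) h12 hN.le
          _ = 2^N * w^N := Real.mul_rpow (by norm_num) (by linarith)
      have p2 : (1:ℝ) ≤ w^N := Real.one_le_rpow hw hN.le
      have p3 : (1:ℝ) ≤ Real.exp (w * Real.cosh 1) := by
        rw [← Real.exp_zero]
        apply Real.exp_le_exp.2
        have := Real.cosh_pos (x := 1)
        positivity
      have psum : C*(1+w)^N * Real.exp (w*Real.cosh 1) + ‖q 1‖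
          ≤ (C*2^N + ‖q 1‖) * (w^N * Real.exp (w*Real.cosh 1)) := by
        have t1 : C*(1+w)^N * Real.exp (w*Real.cosh 1)
            ≤ C*2^N * (w^N * Real.exp (w*Real.cosh 1)) := by
          have hm := mul_le_mul_of_nonneg_right (mul_le_mul_of_nonneg_left p1 hC.le)
            (Real.exp_pos (w*Real.cosh 1)).le
          calc C*(1+w)^N * Real.exp (w*Real.cosh 1)
              ≤ C*(2^N * w^N) * Real.exp (w*Real.cosh 1) := hm
            _ = C*2^N * (w^N * Real.exp (w*Real.cosh 1)) := by ring
        have t2 : ‖q 1‖ ≤ ‖q 1‖ * (w^N * Real.exp (w*Real.cosh 1)) := by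
          have h1e : (1:ℝ) ≤ w^N * Real.exp (w*Real.cosh 1) := by nlinarith
          nlinarith [norm_nonneg (q 1)]
        nlinarith [t1, t2]
      have pfin : (w^N * Real.exp (w*Real.cosh 1)) * (w * Real.exp (-(2*w)))
          = w^(N+1) * Real.exp (-(2 - Real.cosh 1)*w) := by
        rw [Real.rpow_add_one hw0.ne',
          show -(2 - Real.cosh 1)*w = w*Real.cosh 1 + -(2*w) from by ring, Real.exp_add]
        ring
      calc (C*(1+w)^N * Real.exp (w*Real.cosh 1) + ‖q 1‖) * (w * Real.exp (-(2*w)))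
          ≤ ((C*2^N + ‖q 1‖) * (w^N * Real.exp (w*Real.cosh 1))) * (w * Real.exp (-(2*w))) := by
            apply mul_le_mul_of_nonneg_right psum
            positivity
        _ = (C*2^N + ‖q 1‖) * ((w^N * Real.exp (w*Real.cosh 1)) * (w * Real.exp (-(2*w)))) := by
            ring
        _ = (C*2^N + ‖q 1‖) * (w^(N+1) * Real.exp (-(2 - Real.cosh 1)*w)) := by rw [pfin]
    have hfin := le_of_tendsto_of_tendsto hLlim hRlim
      (by filter_upwards [Filter.eventually_ge_atTop (1:ℝ)] with w hw using hmain2 w hw)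
    have hposW : (0:ℝ) < ‖W 1‖ := norm_pos_iff.2 hA
    have : (0:ℝ) < ‖W 1‖ / (2*C₁^2) := by positivity
    linarith
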